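/- Let R be a semi-local ring containing a field of cardinality at least three, and let I ⊂ R be a proper ideal. If a ∈ R is such that both the residue classes of a and of 1 − a in R/I are units, then there exists b ∈ I such that both a + b and 1 − (a + b) are units in R. -/

import Mathlib

/-- Auxiliary: in a type of cardinality ≥ 3 we can avoid two given elements. -/
lemma exists_ne_ne_of_three_le {α : Type*} (h : (3 : Cardinal) ≤ Cardinal.mk α)
    (u v : α) : ∃ x : α, x ≠ u ∧ x ≠ v := by
  classical
  by_contra hcon
  push_neg at hcon
  have hf : Function.Injective (fun x : α => ULift.up.{_,0} (decide (x = u))) := by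
    intro x y hxy
    simp only [ULift.up_inj] at hxy
    by_cases hx : x = u
    · by_cases hy : y = u
      · rw [hx, hy]
      · simp [hx, hy] at hxy
    · by_cases hy : y = u
      · simp [hx, hy] at hxy
      · rw [hcon x hx, hcon y hy]
  have h2 : Cardinal.mk α ≤ 2 := by
    calc Cardinal.mk α ≤ Cardinal.mk (ULift Bool) := Cardinal.mk_le_of_injective hf
    _ = 2 := by simp
  have : (3 : Cardinal) ≤ 2 := h.trans h2
  norm_num at this

/-- Let `R` be a semi-local ring (commutative Noetherian with finitely
many maximal ideals) containing a field of cardinality at least three, and let `I ⊂ R`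
be a proper ideal.  If `a ∈ R` is such that the residue classes of `a` and of `1 - a`
in `R/I` are both units, then there exists `b ∈ I` such that both `a + b` and
`1 - (a + b)` are units in `R`. -/
theorem milnor_elem_unit_lift_both
    (R : Type*) [CommRing R] [IsNoetherianRing R] [Finite (MaximalSpectrum R)]
    (k : Type*) [Field k] [Algebra k R] (hk : (3 : Cardinal) ≤ Cardinal.mk k)
    (I : Ideal R) (hI : I ≠ ⊤)
    (a : R) (ha : IsUnit (Ideal.Quotient.mk I a))
    (ha' : IsUnit (Ideal.Quotient.mk I (1 - a))) :
    ∃ b ∈ I, IsUnit (a + b) ∧ IsUnit (1 - (a + b)) := by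
  classical
  have hnt : Nontrivial R := by
    rcases subsingleton_or_nontrivial R with hs | hnt
    · exact absurd (Subsingleton.elim I ⊤) hI
    · exact hnt
  -- indexing type: maximal ideals not containing I
  haveI : Finite {m : MaximalSpectrum R // ¬ I ≤ m.asIdeal} := Subtype.finite
  haveI := Fintype.ofFinite {m : MaximalSpectrum R // ¬ I ≤ m.asIdeal}
  -- For each such m, pick cₘ with a + cₘ ∉ m and 1 - (a + cₘ) ∉ m.
  have hchoice : ∀ m : {m : MaximalSpectrum R // ¬ I ≤ m.asIdeal}, ∃ c : R,
      a + c ∉ m.1.asIdeal ∧ 1 - (a + c) ∉ m.1.asIdeal := by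
    intro m
    have hmax := m.1.isMaximal
    have hinj : Function.Injective
        ((Ideal.Quotient.mk m.1.asIdeal).comp (algebraMap k R)) :=
      RingHom.injective _
    have hcard : (3 : Cardinal) ≤ Cardinal.mk (R ⧸ m.1.asIdeal) := by
      have hle := Cardinal.lift_mk_le'.mpr ⟨⟨_, hinj⟩⟩
      have h1 := (Cardinal.lift_le.2 hk).trans hle
      simpa using h1
    obtain ⟨x, hx1, hx2⟩ := exists_ne_ne_of_three_le hcard
      (-(Ideal.Quotient.mk m.1.asIdeal a)) (1 - Ideal.Quotient.mk m.1.asIdeal a)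
    obtain ⟨c, rfl⟩ := Ideal.Quotient.mk_surjective x
    refine ⟨c, ?_, ?_⟩
    · intro hmem
      apply hx1
      have h0 := (Ideal.Quotient.eq_zero_iff_mem).2 hmem
      rw [map_add] at h0
      linear_combination h0
    · intro hmem
      apply hx2
      have h0 := (Ideal.Quotient.eq_zero_iff_mem).2 hmem
      rw [map_sub, map_add, map_one] at h0
      linear_combination -h0
  choose c hc1 hc2 using hchoice
  -- CRT family
  let f : Option {m : MaximalSpectrum R // ¬ I ≤ m.asIdeal} → Ideal R :=
    fun o => o.elim I (fun m => m.1.asIdeal)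
  have hco : Pairwise fun i j => IsCoprime (f i) (f j) := by
    have key : ∀ m : {m : MaximalSpectrum R // ¬ I ≤ m.asIdeal},
        I ⊔ m.1.asIdeal = ⊤ := by
      intro m
      have hlt : m.1.asIdeal < I ⊔ m.1.asIdeal :=
        lt_of_le_of_ne le_sup_right (fun h => m.2 (h ▸ le_sup_left))
      exact m.1.isMaximal.1.2 _ hlt
    intro i j hij
    rw [Ideal.isCoprime_iff_sup_eq]
    match i, j with
    | none, none => exact absurd rfl hij
    | none, some m => exact key m
    | some m, none => rw [sup_comm]; exact key m
    | some m, some m' =>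
        refine m.1.isMaximal.coprime_of_ne m'.1.isMaximal ?_
        intro h
        apply hij
        have : m = m' := Subtype.ext (MaximalSpectrum.ext h)
        rw [this]
  obtain ⟨b, hb⟩ := Ideal.exists_forall_sub_mem_ideal hco
    (fun o => o.elim 0 (fun m => c m))
  have hbI : b ∈ I := by simpa [f] using hb none
  have hbc : ∀ m, b - c m ∈ m.1.asIdeal := fun m => hb (some m)
  -- key: a + b and 1 - (a + b) lie in no maximal ideal
  have hnotmem : ∀ (x : R), (∀ m : MaximalSpectrum R, x ∉ m.asIdeal) → IsUnit x := by
    intro x hx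
    by_contra hxu
    obtain ⟨M, hM, hxM⟩ := exists_max_ideal_of_mem_nonunits (mem_nonunits_iff.2 hxu)
    exact hx ⟨M, hM⟩ hxM
  have hmain : ∀ m : MaximalSpectrum R,
      a + b ∉ m.asIdeal ∧ 1 - (a + b) ∉ m.asIdeal := by
    intro m
    by_cases hIm : I ≤ m.asIdeal
    · -- a, 1-a units mod I, so a ∉ m and 1-a ∉ m; b ∈ I ≤ m.
      have hbm : b ∈ m.asIdeal := hIm hbI
      have key : ∀ y : R, IsUnit (Ideal.Quotient.mk I y) → y ∉ m.asIdeal := by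
        intro y hy hym
        have hq : Ideal.Quotient.mk m.asIdeal y = 0 :=
          Ideal.Quotient.eq_zero_iff_mem.2 hym
        -- factor the quotient map through I
        have hu2 : IsUnit (Ideal.Quotient.mk m.asIdeal y) := by
          have hfac : Ideal.Quotient.mk m.asIdeal y =
              Ideal.Quotient.factor hIm (Ideal.Quotient.mk I y) := by
            rw [← Ideal.Quotient.factor_comp_mk hIm]; rfl
          rw [hfac]
          exact hy.map _
        haveI : Nontrivial (R ⧸ m.asIdeal) := Ideal.Quotient.nontrivial_iff.mpr m.isMaximal.ne_top
        rw [hq] at hu2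
        exact hu2.ne_zero rfl
      constructor
      · intro hmem
        exact key a ha (by
          have := m.asIdeal.sub_mem hmem hbm
          simpa using this)
      · intro hmem
        apply key (1 - a) ha'
        have := m.asIdeal.add_mem hmem hbm
        have h2 : 1 - a = 1 - (a + b) + b := by ring
        rw [h2]; exact this
    · -- m doesn't contain I: use the chosen c
      set m' : {m : MaximalSpectrum R // ¬ I ≤ m.asIdeal} := ⟨m, hIm⟩
      have hd := hbc m'
      constructor
      · intro hmem
        apply hc1 m'
        have := m.asIdeal.sub_mem hmem hd
        have h2 : a + c m' = a + b - (b - c m') := by ring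
        rw [h2]; exact this
      · intro hmem
        apply hc2 m'
        have := m.asIdeal.add_mem hmem hd
        have h2 : 1 - (a + c m') = 1 - (a + b) + (b - c m') := by ring
        rw [h2]; exact this
  exact ⟨b, hbI, hnotmem _ (fun m => (hmain m).1),
    hnotmem _ (fun m => (hmain m).2)⟩
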